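/- Let m ≥ 1 and N ≥ 1 be natural numbers, and let H_1, …, H_N be independent random variables each uniformly distributed on {0, 1, …, m−1}. Let Z be the number of positions j ∈ {0, …, m−1} such that no H_i equals j, and let p = (1 − 1/m)^N. Then for every real ε > 0, the probability that |Z − m·p| > ε·m is at most 2·exp(−ε²·m²/(2N)). -/

import Mathlib

open MeasureTheory ProbabilityTheory
open scoped ENNReal

namespace BloomAux2
open Finset


def Lip {m : ℕ} (n : ℕ) (f : (Fin n → Fin m) → ℝ) : Prop :=
  ∀ x y : Fin n → Fin m, ∀ i : Fin n, (∀ j, j ≠ i → x j = y j) → |f x - f y| ≤ 1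

variable {m : ℕ}

lemma step {β : Type*} [Fintype β] (h : β → ℝ) (h0 : ∑ v, h v = 0)
    (h1 : ∀ v, |h v| ≤ 1) (l : ℝ) :
    ∑ v, Real.exp (l * h v) ≤ (Fintype.card β : ℝ) * Real.exp (l ^ 2 / 2) := by
  have key : ∀ v, Real.exp (l * h v) ≤ Real.cosh l + h v * Real.sinh l := by
    intro v
    have hv := abs_le.mp (h1 v)
    have hc := convexOn_exp.2 (Set.mem_univ (-l)) (Set.mem_univ l)
      (show (0:ℝ) ≤ (1 - h v)/2 by linarith)
      (show (0:ℝ) ≤ (1 + h v)/2 by linarith) (by ring)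
    simp only [smul_eq_mul] at hc
    have harg : (1 - h v)/2 * (-l) + (1 + h v)/2 * l = l * h v := by ring
    rw [harg] at hc
    calc Real.exp (l * h v) ≤ (1 - h v)/2 * Real.exp (-l) + (1 + h v)/2 * Real.exp l := hc
      _ = Real.cosh l + h v * Real.sinh l := by rw [Real.cosh_eq, Real.sinh_eq]; ring
  calc ∑ v, Real.exp (l * h v) ≤ ∑ v, (Real.cosh l + h v * Real.sinh l) :=
        Finset.sum_le_sum fun v _ => key v
    _ = (Fintype.card β : ℝ) * Real.cosh l := by
        rw [Finset.sum_add_distrib, ← Finset.sum_mul, h0, Finset.sum_const, Finset.card_univ,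
          nsmul_eq_mul, zero_mul, add_zero]
    _ ≤ (Fintype.card β : ℝ) * Real.exp (l ^ 2 / 2) :=
        mul_le_mul_of_nonneg_left (Real.cosh_le_exp_half_sq l) (Nat.cast_nonneg _)



lemma sum_snoc {n : ℕ} (F : (Fin (n+1) → Fin m) → ℝ) :
    ∑ x, F x = ∑ y : Fin n → Fin m, ∑ v : Fin m, F (Fin.snoc y v) := by
  rw [← Equiv.sum_comp (Fin.snocEquiv (fun _ => Fin m)) F, Fintype.sum_prod_type]
  rw [Finset.sum_comm]
  rfl

lemma mgf (hm : 0 < m) : ∀ (n : ℕ) (f : (Fin n → Fin m) → ℝ), Lip n f → ∀ l : ℝ,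
    ∑ x, Real.exp (l * (f x - (∑ x, f x) / (m:ℝ) ^ n))
      ≤ (m:ℝ) ^ n * Real.exp (n * l ^ 2 / 2) := by
  intro n
  induction n with
  | zero =>
    intro f _ l
    simp
  | succ n ih =>
    intro f hf l
    set g : (Fin n → Fin m) → ℝ := fun y => (∑ v, f (Fin.snoc y v)) / m with hg
    have hmR : (0:ℝ) < m := by exact_mod_cast hm
    have hsumg : ∑ y, g y = (∑ x, f x) / m := by
      rw [sum_snoc f, hg, ← Finset.sum_div]
    have hmean : (∑ x, f x) / (m:ℝ) ^ (n+1) = (∑ y, g y) / (m:ℝ) ^ n := by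
      rw [hsumg, div_div]
      rw [show (m:ℝ) * (m:ℝ)^n = (m:ℝ)^(n+1) by rw [pow_succ]; ring]
    -- g is Lipschitz
    have hgl : Lip n g := by
      intro y y' i hyy'
      have : g y - g y' = (∑ v, (f (Fin.snoc y v) - f (Fin.snoc y' v))) / m := by
        rw [hg]; rw [Finset.sum_sub_distrib, sub_div]
      rw [this, abs_div, abs_of_pos hmR]
      rw [div_le_one hmR]
      calc |∑ v, (f (Fin.snoc y v) - f (Fin.snoc y' v))|
          ≤ ∑ v : Fin m, |f (Fin.snoc y v) - f (Fin.snoc y' v)| := Finset.abs_sum_le_sum_abs _ _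
        _ ≤ ∑ _v : Fin m, (1:ℝ) := by
            refine Finset.sum_le_sum fun v _ => hf _ _ i.castSucc fun j hj => ?_
            by_cases hjl : j = Fin.last n
            · subst hjl; simp [Fin.snoc_last]
            · obtain ⟨k, rfl⟩ := Fin.exists_castSucc_eq.mpr hjl
              have hki : k ≠ i := fun h => hj (by rw [h])
              simp [Fin.snoc_castSucc, hyy' k hki]
        _ = (m:ℝ) := by simp
    -- the fiber function has mean zero and is bounded
    have hfib0 : ∀ y : Fin n → Fin m, ∑ v, (f (Fin.snoc y v) - g y) = 0 := by
      intro y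
      rw [Finset.sum_sub_distrib, Finset.sum_const, Finset.card_univ, Fintype.card_fin,
        nsmul_eq_mul, hg, mul_div_cancel₀ _ (ne_of_gt hmR), sub_self]
    have hfib1 : ∀ (y : Fin n → Fin m) (v : Fin m), |f (Fin.snoc y v) - g y| ≤ 1 := by
      intro y v
      have : f (Fin.snoc y v) - g y = (∑ v' : Fin m, (f (Fin.snoc y v) - f (Fin.snoc y v'))) / m := by
        rw [Finset.sum_sub_distrib, Finset.sum_const, Finset.card_univ, Fintype.card_fin,
          nsmul_eq_mul, sub_div, mul_div_cancel_left₀ _ (ne_of_gt hmR), hg]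
      rw [this, abs_div, abs_of_pos hmR, div_le_one hmR]
      calc |∑ v' : Fin m, (f (Fin.snoc y v) - f (Fin.snoc y v'))|
          ≤ ∑ v' : Fin m, |f (Fin.snoc y v) - f (Fin.snoc y v')| := Finset.abs_sum_le_sum_abs _ _
        _ ≤ ∑ _v' : Fin m, (1:ℝ) := by
            refine Finset.sum_le_sum fun v' _ => hf _ _ (Fin.last n) fun j hj => ?_
            obtain ⟨k, rfl⟩ := Fin.exists_castSucc_eq.mpr hj
            simp [Fin.snoc_castSucc]
        _ = (m:ℝ) := by simp
    -- main computation
    have hμdef : ∃ μ : ℝ, μ = (∑ x, f x) / (m:ℝ) ^ (n+1) := ⟨_, rfl⟩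
    obtain ⟨μ, hμ⟩ := hμdef
    rw [← hμ]
    calc ∑ x, Real.exp (l * (f x - μ))
        = ∑ y : Fin n → Fin m, ∑ v : Fin m,
            Real.exp (l * (g y - μ)) * Real.exp (l * (f (Fin.snoc y v) - g y)) := by
          rw [sum_snoc (fun x => Real.exp (l * (f x - μ)))]
          refine Finset.sum_congr rfl fun y _ => Finset.sum_congr rfl fun v _ => ?_
          rw [← Real.exp_add]; ring_nf
      _ ≤ ∑ y : Fin n → Fin m, Real.exp (l * (g y - μ)) * ((m:ℝ) * Real.exp (l ^ 2 / 2)) := by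
          refine Finset.sum_le_sum fun y _ => ?_
          rw [← Finset.mul_sum]
          refine mul_le_mul_of_nonneg_left ?_ (Real.exp_pos _).le
          have := step (fun v => f (Fin.snoc y v) - g y) (hfib0 y) (hfib1 y) l
          simpa using this
      _ = (m:ℝ) * Real.exp (l ^ 2 / 2) * ∑ y : Fin n → Fin m, Real.exp (l * (g y - μ)) := by
          rw [← Finset.sum_mul]; ring
      _ ≤ (m:ℝ) * Real.exp (l ^ 2 / 2) * ((m:ℝ) ^ n * Real.exp (n * l ^ 2 / 2)) := by
          refine mul_le_mul_of_nonneg_left ?_ (by positivity)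
          rw [hμ, hmean]
          exact ih g hgl l
      _ = (m:ℝ) ^ (n+1) * Real.exp ((n+1 : ℕ) * l ^ 2 / 2) := by
          rw [show ((n+1:ℕ):ℝ) * l ^ 2 / 2 = l ^ 2 / 2 + n * l ^ 2 / 2 by push_cast; ring,
            Real.exp_add, pow_succ]
          ring

lemma chernoff_one (hm : 0 < m) {n : ℕ} (hn : 1 ≤ n) (f : (Fin n → Fin m) → ℝ) (hf : Lip n f)
    (t : ℝ) (ht : 0 < t) :
    ((univ.filter fun x => f x - (∑ x, f x) / (m:ℝ) ^ n > t).card : ℝ)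
      ≤ (m:ℝ) ^ n * Real.exp (-(t ^ 2) / (2 * n)) := by
  have hnR : (0:ℝ) < n := by exact_mod_cast hn
  set l : ℝ := t / n with hl
  have hl0 : 0 < l := div_pos ht hnR
  set μ := (∑ x, f x) / (m:ℝ) ^ n with hμ
  set S := univ.filter fun x : Fin n → Fin m => f x - μ > t with hS
  have h1 : (S.card : ℝ) * Real.exp (l * t) ≤ ∑ x, Real.exp (l * (f x - μ)) := by
    calc (S.card : ℝ) * Real.exp (l * t) = ∑ _x ∈ S, Real.exp (l * t) := by
          rw [Finset.sum_const, nsmul_eq_mul]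
      _ ≤ ∑ x ∈ S, Real.exp (l * (f x - μ)) := by
          refine Finset.sum_le_sum fun x hx => ?_
          have hxS : f x - μ > t := by
            rw [hS] at hx; exact (Finset.mem_filter.mp hx).2
          exact Real.exp_le_exp.mpr (mul_le_mul_of_nonneg_left hxS.le hl0.le)
      _ ≤ ∑ x, Real.exp (l * (f x - μ)) :=
          Finset.sum_le_sum_of_subset_of_nonneg (Finset.filter_subset _ _)
            (fun _ _ _ => (Real.exp_pos _).le)
  have h2 := (h1.trans (mgf hm n f hf l))
  have h3 : (S.card : ℝ) ≤ (m:ℝ) ^ n * Real.exp ((n:ℝ) * l ^ 2 / 2) * Real.exp (-(l * t)) := by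
    rw [Real.exp_neg, ← div_eq_mul_inv]
    exact (le_div_iff₀ (Real.exp_pos _)).mpr h2
  refine h3.trans_eq ?_
  rw [mul_assoc, ← Real.exp_add]
  congr 1
  rw [hl]
  field_simp
  ring

lemma chernoff_two (hm : 0 < m) {n : ℕ} (hn : 1 ≤ n) (f : (Fin n → Fin m) → ℝ) (hf : Lip n f)
    (μ t : ℝ) (hμ : μ = (∑ x, f x) / (m:ℝ) ^ n) (ht : 0 < t) :
    ((univ.filter fun x => |f x - μ| > t).card : ℝ)
      ≤ 2 * ((m:ℝ) ^ n * Real.exp (-(t ^ 2) / (2 * n))) := by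
  have hsub : (univ.filter fun x : Fin n → Fin m => |f x - μ| > t)
      ⊆ (univ.filter fun x => f x - μ > t) ∪ (univ.filter fun x => (-f) x - (-μ) > t) := by
    intro x hx
    rw [Finset.mem_filter] at hx
    rcases lt_abs.mp hx.2 with h | h
    · exact Finset.mem_union_left _ (Finset.mem_filter.mpr ⟨Finset.mem_univ _, h⟩)
    · refine Finset.mem_union_right _ (Finset.mem_filter.mpr ⟨Finset.mem_univ _, ?_⟩)
      simp only [Pi.neg_apply]
      linarith
  have hc1 : ((univ.filter fun x : Fin n → Fin m => f x - μ > t).card : ℝ)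
      ≤ (m:ℝ) ^ n * Real.exp (-(t ^ 2) / (2 * n)) := by
    rw [hμ]; exact chernoff_one hm hn f hf t ht
  have hnegLip : Lip n (-f) := by
    intro x y i hxy
    simp only [Pi.neg_apply]
    rw [show -f x - -f y = -(f x - f y) by ring, abs_neg]
    exact hf x y i hxy
  have hc2 : ((univ.filter fun x : Fin n → Fin m => (-f) x - (-μ) > t).card : ℝ)
      ≤ (m:ℝ) ^ n * Real.exp (-(t ^ 2) / (2 * n)) := by
    have hμ' : -μ = (∑ x, (-f) x) / (m:ℝ) ^ n := by
      simp only [Pi.neg_apply, Finset.sum_neg_distrib, hμ]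
      ring
    rw [hμ']
    exact chernoff_one hm hn (-f) hnegLip t ht
  calc ((univ.filter fun x : Fin n → Fin m => |f x - μ| > t).card : ℝ)
      ≤ (((univ.filter fun x : Fin n → Fin m => f x - μ > t)
          ∪ (univ.filter fun x => (-f) x - (-μ) > t)).card : ℝ) := by
        exact_mod_cast Finset.card_le_card hsub
    _ ≤ (((univ.filter fun x : Fin n → Fin m => f x - μ > t).card : ℝ)
          + ((univ.filter fun x : Fin n → Fin m => (-f) x - (-μ) > t).card : ℝ)) := by
        exact_mod_cast Finset.card_union_le _ _
    _ ≤ 2 * ((m:ℝ) ^ n * Real.exp (-(t ^ 2) / (2 * n))) := by linarith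


lemma lip_empties (N : ℕ) :
    Lip (m := m) N (fun x => ((univ.filter fun j : Fin m => ∀ i, x i ≠ j).card : ℝ)) := by
  have key : ∀ u v : Fin N → Fin m, ∀ i : Fin N, (∀ j, j ≠ i → u j = v j) →
      (univ.filter fun j : Fin m => ∀ i', u i' ≠ j).card
        ≤ (univ.filter fun j : Fin m => ∀ i', v i' ≠ j).card + 1 := by
    intro u v i huv
    have hsub : (univ.filter fun j : Fin m => ∀ i', u i' ≠ j)
        ⊆ insert (v i) (univ.filter fun j : Fin m => ∀ i', v i' ≠ j) := by
      intro j hj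
      simp only [Finset.mem_filter, Finset.mem_univ, true_and] at hj
      by_cases h : ∀ i', v i' ≠ j
      · exact Finset.mem_insert_of_mem (by simp [h])
      · push_neg at h
        obtain ⟨i', hi'⟩ := h
        have hii : i' = i := by
          by_contra hne
          exact hj i' (huv i' hne ▸ hi')
        rw [Finset.mem_insert]
        exact Or.inl (by rw [← hi', hii])
    calc (univ.filter fun j : Fin m => ∀ i', u i' ≠ j).card
        ≤ (insert (v i) (univ.filter fun j : Fin m => ∀ i', v i' ≠ j)).card :=
          Finset.card_le_card hsub
      _ ≤ (univ.filter fun j : Fin m => ∀ i', v i' ≠ j).card + 1 :=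
          Finset.card_insert_le _ _
  intro x y i hxy
  rw [abs_sub_le_iff]
  constructor
  · have := key x y i hxy
    have h' : ((univ.filter fun j : Fin m => ∀ i', x i' ≠ j).card : ℝ)
        ≤ ((univ.filter fun j : Fin m => ∀ i', y i' ≠ j).card : ℝ) + 1 := by exact_mod_cast this
    linarith
  · have := key y x i (fun j hj => (hxy j hj).symm)
    have h' : ((univ.filter fun j : Fin m => ∀ i', y i' ≠ j).card : ℝ)
        ≤ ((univ.filter fun j : Fin m => ∀ i', x i' ≠ j).card : ℝ) + 1 := by exact_mod_cast this
    linarith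

lemma sum_empties (hm : 1 ≤ m) (N : ℕ) :
    ∑ x : Fin N → Fin m, ((univ.filter fun j : Fin m => ∀ i, x i ≠ j).card : ℝ)
      = (m : ℝ) * ((m : ℝ) - 1) ^ N := by
  have hnat : ∑ x : Fin N → Fin m, (univ.filter fun j : Fin m => ∀ i, x i ≠ j).card
      = m * (m - 1) ^ N := by
    simp_rw [Finset.card_filter]
    rw [Finset.sum_comm]
    have hfix : ∀ j : Fin m, (∑ x : Fin N → Fin m, if ∀ i, x i ≠ j then 1 else 0)
        = (m - 1) ^ N := by
      intro j
      rw [← Finset.card_filter]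
      have : (univ.filter fun x : Fin N → Fin m => ∀ i, x i ≠ j)
          = Fintype.piFinset (fun _ : Fin N => univ.erase j) := by
        ext x
        simp [Fintype.mem_piFinset, Finset.mem_erase]
      rw [this, Fintype.card_piFinset]
      simp [Finset.card_erase_of_mem, Finset.card_univ]
    simp_rw [hfix]
    simp [Finset.card_univ, mul_comm]
  calc ∑ x : Fin N → Fin m, ((univ.filter fun j : Fin m => ∀ i, x i ≠ j).card : ℝ)
      = ((∑ x : Fin N → Fin m, (univ.filter fun j : Fin m => ∀ i, x i ≠ j).card : ℕ) : ℝ) := by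
        push_cast; rfl
    _ = (m : ℝ) * ((m : ℝ) - 1) ^ N := by
        rw [hnat]
        have : ((m - 1 : ℕ) : ℝ) = (m : ℝ) - 1 := by
          rw [Nat.cast_sub hm]; norm_num
        push_cast [this]
        ring

end BloomAux2

/-- Concentration (Mitzenmacher) for the number of zero bits of a Bloom filter:
`N ≥ 1` independent uniform hash evaluations into `m` bins; with `p = (1-1/m)^N`,
the number `Z` of empty bins deviates from `m·p` by more than `ε·m` with
probability at most `2·exp(-ε²m²/(2N))`. -/
theorem zero_bits_concentration
    {Ω : Type*} [MeasureSpace Ω] [IsProbabilityMeasure (ℙ : Measure Ω)]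
    (m N : ℕ) (hm : 1 ≤ m) (hN : 1 ≤ N)
    (H : Fin N → Ω → Fin m)
    (hmeas : ∀ i, Measurable (H i))
    (hindep : iIndepFun H ℙ)
    (hunif : ∀ (i : Fin N) (j : Fin m), ℙ {ω | H i ω = j} = 1 / (m : ℝ≥0∞))
    (p : ℝ) (hp : p = (1 - 1 / (m : ℝ)) ^ N)
    (ε : ℝ) (hε : 0 < ε) :
    (ℙ {ω | |((Finset.univ.filter (fun j : Fin m => ∀ i, H i ω ≠ j)).card : ℝ)
        - (m : ℝ) * p| > ε * m}).toReal
      ≤ 2 * Real.exp (-(ε ^ 2 * (m : ℝ) ^ 2) / (2 * N)) := by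
  have hm0 : 0 < m := hm
  have hmR : (0:ℝ) < m := by exact_mod_cast hm0
  set f : (Fin N → Fin m) → ℝ :=
    fun x => ((Finset.univ.filter (fun j : Fin m => ∀ i, x i ≠ j)).card : ℝ) with hfdef
  -- the mean equals m*p
  have hmean : (m:ℝ) * p = (∑ x, f x) / (m:ℝ) ^ N := by
    rw [hfdef]
    simp only
    rw [BloomAux2.sum_empties hm0 N, hp,
      show (1 - 1/(m:ℝ)) = ((m:ℝ) - 1)/(m:ℝ) by field_simp, div_pow]
    field_simp
    try ring
  set S : Finset (Fin N → Fin m) :=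
    Finset.univ.filter (fun x => |f x - (m:ℝ) * p| > ε * m) with hSdef
  -- event as a disjoint union over S
  have hev : {ω : Ω | |((Finset.univ.filter (fun j : Fin m => ∀ i, H i ω ≠ j)).card : ℝ)
      - (m : ℝ) * p| > ε * m} = ⋃ x ∈ S, ⋂ i, H i ⁻¹' {x i} := by
    ext ω
    simp only [Set.mem_setOf_eq, Set.mem_iUnion, Set.mem_iInter, Set.mem_preimage,
      Set.mem_singleton_iff, hSdef, Finset.mem_filter, Finset.mem_univ, true_and, hfdef]
    constructor
    · intro h
      exact ⟨fun i => H i ω, h, fun i => rfl⟩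
    · rintro ⟨x, hx, hxe⟩
      simpa only [hxe] using hx
  have hatom : ∀ x : Fin N → Fin m,
      ℙ (⋂ i, H i ⁻¹' {x i}) = (1 / (m : ℝ≥0∞)) ^ N := by
    intro x
    rw [hindep.meas_iInter (fun i => ⟨{x i}, measurableSet_singleton _, rfl⟩)]
    have : ∀ i, ℙ (H i ⁻¹' {x i}) = 1 / (m : ℝ≥0∞) := fun i => hunif i (x i)
    simp_rw [this]
    rw [Finset.prod_const, Finset.card_univ, Fintype.card_fin]
  have hmdisj : (S : Set (Fin N → Fin m)).PairwiseDisjoint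
      (fun x => ⋂ i, H i ⁻¹' {x i}) := by
    intro x _ y _ hxy
    refine Set.disjoint_left.mpr fun ω hx hy => hxy ?_
    funext i
    have h1 := Set.mem_iInter.mp hx i
    have h2 := Set.mem_iInter.mp hy i
    simp only [Set.mem_preimage, Set.mem_singleton_iff] at h1 h2
    rw [← h1, ← h2]
  have hE : ℙ {ω : Ω | |((Finset.univ.filter (fun j : Fin m => ∀ i, H i ω ≠ j)).card : ℝ)
      - (m : ℝ) * p| > ε * m} = S.card * (1 / (m : ℝ≥0∞)) ^ N := by
    rw [hev, measure_biUnion_finset hmdisj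
      (fun x _ => MeasurableSet.iInter fun i => hmeas i (measurableSet_singleton _))]
    simp_rw [hatom]
    rw [Finset.sum_const, nsmul_eq_mul]
  rw [hE]
  have htoReal : ((S.card : ℝ≥0∞) * (1 / (m : ℝ≥0∞)) ^ N).toReal
      = (S.card : ℝ) * (1 / (m:ℝ)) ^ N := by
    rw [ENNReal.toReal_mul, ENNReal.toReal_pow, ENNReal.toReal_div]
    simp
  rw [htoReal]
  -- counting bound
  have hcount : (S.card : ℝ) ≤ 2 * ((m:ℝ) ^ N * Real.exp (-((ε * m) ^ 2) / (2 * N))) := by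
    rw [hSdef]
    exact BloomAux2.chernoff_two hm0 hN f (BloomAux2.lip_empties N) ((m:ℝ) * p) (ε * m)
      hmean (by positivity)
  have hpow : (0:ℝ) < (m:ℝ) ^ N := by positivity
  have hfin : (S.card : ℝ) * (1 / (m:ℝ)) ^ N
      ≤ 2 * Real.exp (-((ε * m) ^ 2) / (2 * N)) := by
    rw [div_pow, one_pow, mul_comm]
    calc (1:ℝ)/(m:ℝ)^N * S.card
        ≤ 1/(m:ℝ)^N * (2 * ((m:ℝ)^N * Real.exp (-((ε*m)^2)/(2*N)))) :=
          mul_le_mul_of_nonneg_left hcount (by positivity)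
      _ = 2 * Real.exp (-((ε * m) ^ 2) / (2 * N)) := by
          field_simp
  exact hfin.trans (le_of_eq (by rw [mul_pow]))
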